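/- arXiv:2602.22985 — 2 statements merged into one kernel-verified Lean document; each statement's English description precedes it below -/
import Mathlib

section
/- Under Assumption A, if D(Y,X) = 1, then for P_X-almost every x ∈ 𝒳 the conditional distribution P_{Y|X=x} is degenerate (i.e., a Dirac measure). The key step: if with positive P_X-probability there exist distinct points y₁ ≠ y₂ supported by P_{Y|X=x} with k(y₁, y) = c_x(y) = k(y₂, y) for P_Y-a.e. y, then by continuity of k and full support of P_Y we get k(y₁, ·) = k(y₂, ·) on all of 𝒴, contradicting injectivity of y ↦ k(·, y). -/
open MeasureTheory ProbabilityTheory Filter Set Function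
open scoped ENNReal NNReal Topology

section Aux

variable {α : Type*} [MeasurableSpace α]

lemma aux_memLp (P : Measure α) [IsFiniteMeasure P]
    {f : α → ℝ} (hf : AEStronglyMeasurable f P) {C : ℝ} (hC : ∀ a, |f a| ≤ C) :
    MemLp f 2 P :=
  MemLp.of_bound hf C (Eventually.of_forall fun a => by
    simpa [Real.norm_eq_abs] using hC a)

lemma aux_integrable (P : Measure α) [IsFiniteMeasure P]
    {f : α → ℝ} (hf : AEStronglyMeasurable f P) {C : ℝ} (hC : ∀ a, |f a| ≤ C) :
    Integrable f P :=
  memLp_one_iff_integrable.mp <|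
    (aux_memLp P hf hC).mono_exponent (by norm_num)

lemma aux_var_zero (P : Measure α) [IsProbabilityMeasure P]
    {f : α → ℝ} (hf : Measurable f) {C : ℝ} (hC : ∀ a, |f a| ≤ C)
    (h : variance f P = 0) : ∀ᵐ a ∂P, f a = ∫ u, f u ∂P := by
  have hm : MemLp f 2 P := aux_memLp P hf.aestronglyMeasurable hC
  have hev : evariance f P = 0 := by
    have hlt := hm.evariance_lt_top
    unfold variance at h
    rcases (ENNReal.toReal_eq_zero_iff _).mp h with h0 | h0
    · exact h0
    · exact absurd h0 hlt.ne
  exact (evariance_eq_zero_iff hf.aemeasurable).mp hev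

lemma aux_abs_integral (P : Measure α) [IsProbabilityMeasure P]
    {f : α → ℝ} {C : ℝ} (hC : ∀ a, |f a| ≤ C) :
    |∫ a, f a ∂P| ≤ C := by
  have h := norm_integral_le_of_norm_le_const (μ := P) (f := f) (C := C)
    (Eventually.of_forall fun a => by simpa [Real.norm_eq_abs] using hC a)
  simpa [Real.norm_eq_abs, measure_univ] using h

lemma aux_cont_int {𝒴 : Type*} [TopologicalSpace 𝒴] [MeasurableSpace 𝒴]
    [OpensMeasurableSpace 𝒴] [FirstCountableTopology 𝒴]
    (P : Measure 𝒴) [IsFiniteMeasure P] {g : 𝒴 → 𝒴 → ℝ}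
    (hg : Continuous fun p : 𝒴 × 𝒴 => g p.1 p.2) {C : ℝ} (hC : ∀ u y, |g u y| ≤ C) :
    Continuous fun y => ∫ u, g u y ∂P := by
  apply continuous_of_dominated (bound := fun _ => C)
  · intro y
    exact (hg.comp (continuous_id.prodMk continuous_const)).aestronglyMeasurable
  · intro y
    exact Eventually.of_forall fun u => by simpa [Real.norm_eq_abs] using hC u y
  · exact integrable_const C
  · exact Eventually.of_forall fun u => hg.comp (continuous_const.prodMk continuous_id)

lemma aux_joint_meas {𝒳 𝒴 : Type*} [MeasurableSpace 𝒳]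
    [TopologicalSpace 𝒴] [MeasurableSpace 𝒴] [BorelSpace 𝒴] [PolishSpace 𝒴]
    (κ : Kernel 𝒳 𝒴) [IsMarkovKernel κ]
    {g : 𝒴 → 𝒴 → ℝ} (hg : Continuous fun p : 𝒴 × 𝒴 => g p.1 p.2) {C : ℝ}
    (hC : ∀ u y, |g u y| ≤ C) :
    Measurable fun p : 𝒳 × 𝒴 => ∫ u, g u p.2 ∂κ p.1 := by
  letI := TopologicalSpace.upgradeIsCompletelyMetrizable 𝒴
  have h1 : ∀ y, Measurable fun x => ∫ u, g u y ∂κ x := by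
    intro y
    have hsm : StronglyMeasurable (uncurry fun (_ : 𝒳) (u : 𝒴) => g u y) := by
      have : Measurable fun p : 𝒳 × 𝒴 => g p.2 y :=
        ((hg.comp (continuous_id.prodMk continuous_const)).measurable).comp measurable_snd
      exact this.stronglyMeasurable
    exact (hsm.integral_kernel_prod_right (κ := κ)).measurable
  have h2 : ∀ x, Continuous fun y => ∫ u, g u y ∂κ x := fun x => aux_cont_int (κ x) hg hC
  have h := measurable_uncurry_of_continuous_of_measurable
    (u := fun (y : 𝒴) (x : 𝒳) => ∫ u, g u y ∂κ x) h2 h1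
  exact h.comp measurable_swap

end Aux

/-- Under Assumption A, if `D(Y,X) = 1` (equivalently the integrated normalized
conditional variance vanishes), then for `P_X`-a.e. `x` the conditional
distribution `P_{Y|X=x}` is degenerate, i.e. a Dirac measure. -/
theorem condDistrib_ae_dirac_of_kernel_integrated_R2_eq_one
    {Ω : Type*} [MeasurableSpace Ω]
    {𝒳 : Type*} [TopologicalSpace 𝒳] [MeasurableSpace 𝒳] [BorelSpace 𝒳]
    {𝒴 : Type*} [TopologicalSpace 𝒴] [PolishSpace 𝒴] [MeasurableSpace 𝒴] [BorelSpace 𝒴]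
    [Nonempty 𝒴]
    (μ : Measure Ω) [IsProbabilityMeasure μ]
    (X : Ω → 𝒳) (hX : Measurable X)
    (Y : Ω → 𝒴) (hY : Measurable Y)
    (hsupp : ∀ U : Set 𝒴, IsOpen U → U.Nonempty → 0 < (μ.map Y) U)
    (hnondeg : ¬ ∃ y : 𝒴, μ.map Y = Measure.dirac y)
    (k : 𝒴 → 𝒴 → ℝ)
    (hk_cont : Continuous fun p : 𝒴 × 𝒴 => k p.1 p.2)
    (hk_bdd : ∃ C : ℝ, ∀ u v : 𝒴, |k u v| ≤ C)
    (hk_char : ∀ (P Q : Measure 𝒴), IsProbabilityMeasure P → IsProbabilityMeasure Q →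
      (∀ y : 𝒴, ∫ u, k u y ∂P = ∫ u, k u y ∂Q) → P = Q)
    (hk_nonconst : ∀ y : 𝒴, ∃ u v : 𝒴, k u y ≠ k v y)
    (hD : ∫ x, ∫ y, variance (fun u => k u y) (condDistrib Y X μ x)
            / variance (fun u => k u y) (μ.map Y) ∂(μ.map Y) ∂(μ.map X) = 0) :
    ∀ᵐ x ∂(μ.map X), ∃ y₀ : 𝒴, condDistrib Y X μ x = Measure.dirac y₀ := by
  obtain ⟨C, hC⟩ := hk_bdd
  letI := TopologicalSpace.upgradeIsCompletelyMetrizable 𝒴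
  set ν : Measure 𝒴 := μ.map Y with hν
  set ρ : Measure 𝒳 := μ.map X with hρ
  set κ : Kernel 𝒳 𝒴 := condDistrib Y X μ with hκ
  haveI hκM : IsMarkovKernel κ := by rw [hκ]; infer_instance
  haveI : IsProbabilityMeasure ν := Measure.isProbabilityMeasure_map hY.aemeasurable
  haveI : IsProbabilityMeasure ρ := Measure.isProbabilityMeasure_map hX.aemeasurable
  haveI : ν.IsOpenPosMeasure := ⟨fun U hU hne => (hsupp U hU hne).ne'⟩
  -- continuity/measurability of the kernel sections
  have hfk_cont : ∀ y, Continuous fun u => k u y := fun y =>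
    hk_cont.comp (continuous_id.prodMk continuous_const)
  have hfk_meas : ∀ y, Measurable fun u => k u y := fun y => (hfk_cont y).measurable
  have hksq_cont : Continuous fun p : 𝒴 × 𝒴 => (k p.1 p.2) ^ 2 := hk_cont.pow 2
  have hksq_bdd : ∀ u y, |(k u y) ^ 2| ≤ C ^ 2 := fun u y => by
    rw [abs_pow]
    exact pow_le_pow_left₀ (abs_nonneg _) (hC u y) 2
  -- variance rewriting
  have hmem : ∀ (P : Measure 𝒴) [IsProbabilityMeasure P] (y : 𝒴),
      MemLp (fun u => k u y) 2 P := fun P _ y =>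
    aux_memLp P (hfk_cont y).aestronglyMeasurable (fun u => hC u y)
  have hvar_eq : ∀ (P : Measure 𝒴) [IsProbabilityMeasure P] (y : 𝒴),
      variance (fun u => k u y) P = (∫ u, (k u y) ^ 2 ∂P) - (∫ u, k u y ∂P) ^ 2 := by
    intro P _ y
    rw [variance_eq_sub (hmem P y)]
    rfl
  -- positivity of the denominator
  have hd_pos : ∀ y, 0 < variance (fun u => k u y) ν := by
    intro y
    refine (variance_nonneg _ _).lt_of_ne' fun h0 => ?_
    have hae := aux_var_zero ν (hfk_meas y) (fun u => hC u y) h0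
    set m : ℝ := ∫ u, k u y ∂ν with hm
    have hzero : ν {w | ¬ (k w y = m)} = 0 := by
      rw [← ae_iff]; exact hae
    have hopen : IsOpen {w | ¬ (k w y = m)} :=
      (isClosed_eq (hfk_cont y) continuous_const).isOpen_compl
    have hne : ({w | ¬ (k w y = m)} : Set 𝒴).Nonempty := by
      obtain ⟨u, v, huv⟩ := hk_nonconst y
      rcases ne_or_eq (k u y) m with h | h
      · exact ⟨u, h⟩
      · exact ⟨v, by rw [Set.mem_setOf_eq, ← h]; exact fun hh => huv hh.symm⟩
    exact (hsupp _ hopen hne).ne' hzero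
  -- joint measurability
  have hM : Measurable fun p : 𝒳 × 𝒴 => ∫ u, k u p.2 ∂κ p.1 :=
    aux_joint_meas κ hk_cont hC
  have hQ : Measurable fun p : 𝒳 × 𝒴 => ∫ u, (k u p.2) ^ 2 ∂κ p.1 :=
    aux_joint_meas κ hksq_cont hksq_bdd
  have hv_meas : Measurable fun p : 𝒳 × 𝒴 => variance (fun u => k u p.2) (κ p.1) := by
    have heq : (fun p : 𝒳 × 𝒴 => variance (fun u => k u p.2) (κ p.1))
        = fun p : 𝒳 × 𝒴 => (∫ u, (k u p.2) ^ 2 ∂κ p.1) - (∫ u, k u p.2 ∂κ p.1) ^ 2 :=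
      funext fun p => hvar_eq (κ p.1) p.2
    rw [heq]
    exact hQ.sub (hM.pow_const 2)
  have hd_cont : Continuous fun y => variance (fun u => k u y) ν := by
    have heq : (fun y => variance (fun u => k u y) ν)
        = fun y => (∫ u, (k u y) ^ 2 ∂ν) - (∫ u, k u y ∂ν) ^ 2 :=
      funext fun y => hvar_eq ν y
    rw [heq]
    exact (aux_cont_int ν hksq_cont hksq_bdd).sub ((aux_cont_int ν hk_cont hC).pow 2)
  -- disintegration
  haveI : IsProbabilityMeasure (μ.map fun a => (X a, Y a)) :=
    Measure.isProbabilityMeasure_map (hX.prodMk hY).aemeasurable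
  have hcomp : ρ ⊗ₘ κ = μ.map fun a => (X a, Y a) := by
    have h := (μ.map fun a => (X a, Y a)).disintegrate (μ.map fun a => (X a, Y a)).condKernel
    rw [Measure.fst_map_prodMk hY] at h
    rw [hκ, hρ, condDistrib_def]
    exact h
  have hdis : ∀ (g : 𝒴 → ℝ) {D : ℝ}, Measurable g → (∀ u, |g u| ≤ D) →
      ∫ x, ∫ u, g u ∂κ x ∂ρ = ∫ u, g u ∂ν := by
    intro g D hg hgD
    have hint : Integrable (fun p : 𝒳 × 𝒴 => g p.2) (ρ ⊗ₘ κ) := by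
      rw [hcomp]
      exact aux_integrable _ (hg.comp measurable_snd).aestronglyMeasurable
        (fun p => hgD p.2)
    have h1 := Measure.integral_compProd hint
    have h2 : ∫ p : 𝒳 × 𝒴, g p.2 ∂(ρ ⊗ₘ κ) = ∫ a, g (Y a) ∂μ := by
      rw [hcomp]
      exact integral_map (hX.prodMk hY).aemeasurable
        (hg.comp measurable_snd).aestronglyMeasurable
    have h3 : ∫ u, g u ∂ν = ∫ a, g (Y a) ∂μ :=
      integral_map hY.aemeasurable hg.aestronglyMeasurable
    rw [← h1, h2, h3]
  -- the key per-y total variance inequality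
  have key_y : ∀ y, ∫⁻ x, ENNReal.ofReal (variance (fun u => k u y) (κ x)) ∂ρ
      ≤ ENNReal.ofReal (variance (fun u => k u y) ν) := by
    intro y
    have hmx : Measurable fun x => ∫ u, k u y ∂κ x :=
      hM.comp (measurable_id.prodMk measurable_const)
    have hqx : Measurable fun x => ∫ u, (k u y) ^ 2 ∂κ x :=
      hQ.comp (measurable_id.prodMk measurable_const)
    have hm_bdd : ∀ x, |∫ u, k u y ∂κ x| ≤ C := fun x =>
      aux_abs_integral (κ x) (fun u => hC u y)
    have hq_bdd : ∀ x, |∫ u, (k u y) ^ 2 ∂κ x| ≤ C ^ 2 := fun x =>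
      aux_abs_integral (κ x) (fun u => hksq_bdd u y)
    have hq_int : Integrable (fun x => ∫ u, (k u y) ^ 2 ∂κ x) ρ :=
      aux_integrable ρ hqx.aestronglyMeasurable hq_bdd
    have hm2_int : Integrable (fun x => (∫ u, k u y ∂κ x) ^ 2) ρ :=
      aux_integrable ρ (hmx.pow_const 2).aestronglyMeasurable
        (C := C ^ 2) (fun x => by
          rw [abs_pow]
          exact pow_le_pow_left₀ (abs_nonneg _) (hm_bdd x) 2)
    have hv_int : Integrable (fun x => variance (fun u => k u y) (κ x)) ρ := by
      have heq : (fun x => variance (fun u => k u y) (κ x))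
          = fun x => (∫ u, (k u y) ^ 2 ∂κ x) - (∫ u, k u y ∂κ x) ^ 2 :=
        funext fun x => hvar_eq (κ x) y
      rw [heq]; exact hq_int.sub hm2_int
    have h_q : ∫ x, (∫ u, (k u y) ^ 2 ∂κ x) ∂ρ = ∫ u, (k u y) ^ 2 ∂ν :=
      hdis _ ((hfk_meas y).pow_const 2) (fun u => hksq_bdd u y)
    have h_m : ∫ x, (∫ u, k u y ∂κ x) ∂ρ = ∫ u, k u y ∂ν :=
      hdis _ (hfk_meas y) (fun u => hC u y)
    have hjensen : (∫ x, (∫ u, k u y ∂κ x) ∂ρ) ^ 2 ≤ ∫ x, (∫ u, k u y ∂κ x) ^ 2 ∂ρ := by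
      have hmemm : MemLp (fun x => ∫ u, k u y ∂κ x) 2 ρ :=
        aux_memLp ρ hmx.aestronglyMeasurable hm_bdd
      have hnn := variance_nonneg (fun x => ∫ u, k u y ∂κ x) ρ
      rw [variance_eq_sub hmemm] at hnn
      have hsq : ∫ x, ((fun x => ∫ u, k u y ∂κ x) ^ 2) x ∂ρ
          = ∫ x, (∫ u, k u y ∂κ x) ^ 2 ∂ρ :=
        integral_congr_ae (Eventually.of_forall fun x => by simp)
      rw [hsq] at hnn
      linarith
    have hint_v : ∫ x, variance (fun u => k u y) (κ x) ∂ρ ≤ variance (fun u => k u y) ν := by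
      have heq : (fun x => variance (fun u => k u y) (κ x))
          = fun x => (∫ u, (k u y) ^ 2 ∂κ x) - (∫ u, k u y ∂κ x) ^ 2 :=
        funext fun x => hvar_eq (κ x) y
      rw [heq, integral_sub hq_int hm2_int, h_q, hvar_eq ν y]
      have h2 : (∫ u, k u y ∂ν) ^ 2 ≤ ∫ x, (∫ u, k u y ∂κ x) ^ 2 ∂ρ := by
        rw [← h_m]; exact hjensen
      linarith
    calc ∫⁻ x, ENNReal.ofReal (variance (fun u => k u y) (κ x)) ∂ρ
        = ENNReal.ofReal (∫ x, variance (fun u => k u y) (κ x) ∂ρ) :=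
          (ofReal_integral_eq_lintegral_ofReal hv_int
            (Eventually.of_forall fun x => variance_nonneg _ _)).symm
      _ ≤ ENNReal.ofReal (variance (fun u => k u y) ν) := ENNReal.ofReal_le_ofReal hint_v
  -- the ENNReal-valued integrand
  set Φ : 𝒳 → 𝒴 → ℝ≥0∞ := fun x y => ENNReal.ofReal
    (variance (fun u => k u y) (κ x) / variance (fun u => k u y) ν) with hΦ
  have hΦ_meas : Measurable (Function.uncurry Φ) := by
    apply ENNReal.measurable_ofReal.comp
    exact hv_meas.div (hd_cont.measurable.comp measurable_snd)
  set L : 𝒳 → ℝ≥0∞ := fun x => ∫⁻ y, Φ x y ∂ν with hL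
  have hL_meas : Measurable L := hΦ_meas.lintegral_prod_right'
  have hswap : ∫⁻ x, L x ∂ρ = ∫⁻ y, ∫⁻ x, Φ x y ∂ρ ∂ν :=
    lintegral_lintegral_swap hΦ_meas.aemeasurable
  have hbound1 : ∫⁻ y, ∫⁻ x, Φ x y ∂ρ ∂ν ≤ 1 := by
    calc ∫⁻ y, ∫⁻ x, Φ x y ∂ρ ∂ν ≤ ∫⁻ _, 1 ∂ν := by
          apply lintegral_mono
          intro y
          have hdy := hd_pos y
          have hofd_ne : ENNReal.ofReal (variance (fun u => k u y) ν) ≠ 0 :=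
            (ENNReal.ofReal_pos.mpr hdy).ne'
          calc ∫⁻ x, Φ x y ∂ρ
              = ∫⁻ x, ENNReal.ofReal (variance (fun u => k u y) (κ x))
                  * (ENNReal.ofReal (variance (fun u => k u y) ν))⁻¹ ∂ρ := by
                apply lintegral_congr
                intro x
                show ENNReal.ofReal (variance (fun u => k u y) (κ x)
                    / variance (fun u => k u y) ν) = _
                rw [ENNReal.ofReal_div_of_pos hdy, div_eq_mul_inv]
            _ = (∫⁻ x, ENNReal.ofReal (variance (fun u => k u y) (κ x)) ∂ρ)
                  * (ENNReal.ofReal (variance (fun u => k u y) ν))⁻¹ :=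
                lintegral_mul_const' _ _ (ENNReal.inv_ne_top.mpr hofd_ne)
            _ ≤ ENNReal.ofReal (variance (fun u => k u y) ν)
                  * (ENNReal.ofReal (variance (fun u => k u y) ν))⁻¹ :=
                mul_le_mul_left (key_y y) _
            _ ≤ 1 := ENNReal.mul_inv_le_one _
      _ = 1 := by simp
  have hL_int_le : ∫⁻ x, L x ∂ρ ≤ 1 := by rw [hswap]; exact hbound1
  -- rewrite hD using lintegrals
  have hG_eq : ∀ x, ∫ y, variance (fun u => k u y) (κ x) / variance (fun u => k u y) ν ∂ν
      = (L x).toReal := by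
    intro x
    have hsect : AEStronglyMeasurable
        (fun y => variance (fun u => k u y) (κ x) / variance (fun u => k u y) ν) ν := by
      have : Measurable fun y => variance (fun u => k u y) (κ x) :=
        hv_meas.comp (measurable_const.prodMk measurable_id)
      exact (this.div hd_cont.measurable).aestronglyMeasurable
    rw [integral_eq_lintegral_of_nonneg_ae (Eventually.of_forall fun y =>
      div_nonneg (variance_nonneg _ _) (variance_nonneg _ _)) hsect]
  have h0 : ∫ x, (L x).toReal ∂ρ = 0 := by
    rw [← hD]
    exact integral_congr_ae (Eventually.of_forall fun x => (hG_eq x).symm)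
  have h0' : (∫⁻ x, ENNReal.ofReal ((L x).toReal) ∂ρ).toReal = 0 := by
    rw [← integral_eq_lintegral_of_nonneg_ae
      (Eventually.of_forall fun x => ENNReal.toReal_nonneg)
      hL_meas.ennreal_toReal.aestronglyMeasurable]
    exact h0
  have hL_fin : ∀ᵐ x ∂ρ, L x < ⊤ :=
    ae_lt_top hL_meas (lt_of_le_of_lt hL_int_le ENNReal.one_lt_top).ne
  have hcongr : ∫⁻ x, ENNReal.ofReal ((L x).toReal) ∂ρ = ∫⁻ x, L x ∂ρ :=
    lintegral_congr_ae (hL_fin.mono fun x hx => by simp [ENNReal.ofReal_toReal hx.ne])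
  rw [hcongr] at h0'
  have hzero : ∫⁻ x, L x ∂ρ = 0 := by
    rcases (ENNReal.toReal_eq_zero_iff _).mp h0' with h | h
    · exact h
    · exact absurd h (lt_of_le_of_lt hL_int_le ENNReal.one_lt_top).ne
  have hae0 : ∀ᵐ x ∂ρ, L x = 0 := (lintegral_eq_zero_iff hL_meas).mp hzero
  -- conclude pointwise
  filter_upwards [hae0] with x hx
  have hΦx_meas : Measurable fun y => Φ x y :=
    hΦ_meas.comp (measurable_const.prodMk measurable_id)
  have hΦ0 : ∀ᵐ y ∂ν, Φ x y = 0 := (lintegral_eq_zero_iff hΦx_meas).mp hx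
  have hv0 : ∀ᵐ y ∂ν, variance (fun u => k u y) (κ x) = 0 := by
    filter_upwards [hΦ0] with y hy
    have hdy := hd_pos y
    have hr0 : variance (fun u => k u y) (κ x) / variance (fun u => k u y) ν = 0 :=
      le_antisymm (ENNReal.ofReal_eq_zero.mp hy)
        (div_nonneg (variance_nonneg _ _) (variance_nonneg _ _))
    rcases div_eq_zero_iff.mp hr0 with h | h
    · exact h
    · exact absurd h hdy.ne'
  -- find a support point
  haveI : IsProbabilityMeasure (κ x) := IsMarkovKernel.isProbabilityMeasure x
  obtain ⟨u₀, -, hu₀⟩ := MeasureTheory.exists_mem_forall_mem_nhdsWithin_pos_measure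
    (μ := κ x) (s := Set.univ) (by simp)
  simp only [nhdsWithin_univ] at hu₀
  have hae_eq : (fun y => k u₀ y) =ᵐ[ν] fun y => ∫ u, k u y ∂κ x := by
    filter_upwards [hv0] with y hy
    have hconst := aux_var_zero (κ x) (hfk_meas y) (fun u => hC u y) hy
    by_contra hne
    have hopen : IsOpen {u | ¬ (k u y = ∫ u', k u' y ∂κ x)} :=
      (isClosed_eq (hfk_cont y) continuous_const).isOpen_compl
    have hmem0 : {u | ¬ (k u y = ∫ u', k u' y ∂κ x)} ∈ 𝓝 u₀ :=
      hopen.mem_nhds hne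
    have hpos := hu₀ _ hmem0
    have hzero : (κ x) {u | ¬ (k u y = ∫ u', k u' y ∂κ x)} = 0 := by
      rw [← ae_iff]; exact hconst
    exact hpos.ne' hzero
  have heq : ∀ y, k u₀ y = ∫ u, k u y ∂κ x := by
    have hcontl : Continuous fun y => k u₀ y :=
      hk_cont.comp (continuous_const.prodMk continuous_id)
    have hcontr : Continuous fun y => ∫ u, k u y ∂κ x := aux_cont_int (κ x) hk_cont hC
    have := (Continuous.ae_eq_iff_eq ν hcontl hcontr).mp hae_eq
    exact fun y => congrFun this y
  refine ⟨u₀, hk_char (κ x) (Measure.dirac u₀) inferInstance inferInstance fun y => ?_⟩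
  rw [integral_dirac]
  exact (heq y).symm
end

section
/- Bounded differences (McDiarmid) inequality: let X₁, …, X_n be independent random variables in a measurable space 𝒳, and let f : 𝒳ⁿ → ℝ satisfy the bounded difference property with constants c₁, …, c_n, i.e., changing the i-th coordinate changes f by at most c_i. Then with Z = f(X₁,…,X_n) and ν = (1/4)∑ᵢ cᵢ², for all t > 0: P(Z − E[Z] > t) ≤ exp(−t²/(2ν)). -/
open MeasureTheory ProbabilityTheory Real

section McDiarmidAux

lemma mcdiarmid_nonempty_of_prob {α : Type*} [MeasurableSpace α] (ρ : Measure α)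
    [IsProbabilityMeasure ρ] : Nonempty α := by
  by_contra hne
  rw [not_nonempty_iff] at hne
  have h0 : (Set.univ : Set α) = ∅ := Set.univ_eq_empty_iff.2 hne
  have := measure_univ (μ := ρ)
  rw [h0] at this
  simp at this

lemma mcdiarmid_abs_int_le {α : Type*} [MeasurableSpace α] (ρ : Measure α) (g : α → ℝ) :
    |∫ x, g x ∂ρ| ≤ ∫ x, |g x| ∂ρ := by
  simpa [Real.norm_eq_abs] using MeasureTheory.norm_integral_le_integral_norm (μ := ρ) g

lemma mcdiarmid_integrable_of_bdd {α : Type*} [MeasurableSpace α] (ρ : Measure α)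
    [IsFiniteMeasure ρ]
    (g : α → ℝ) (hg : Measurable g) (C : ℝ) (hC : ∀ x, |g x| ≤ C) : Integrable g ρ :=
  ⟨hg.aestronglyMeasurable, HasFiniteIntegral.of_bounded (C := C) (Filter.Eventually.of_forall hC)⟩

end McDiarmidAux

lemma mcdiarmid_core (p : ℝ) (hp0 : 0 ≤ p) (hp1 : p ≤ 1) :
    ∀ h : ℝ, 0 ≤ h → -(p*h) + Real.log (1 - p + p * Real.exp h) ≤ h^2/8 := by
  have hu : ∀ x : ℝ, 0 < 1 - p + p * Real.exp x := by
    intro x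
    have := Real.exp_pos x
    rcases lt_or_eq_of_le hp1 with h1 | h1
    · nlinarith
    · nlinarith
  set u : ℝ → ℝ := fun x => 1 - p + p * Real.exp x with hu_def
  set G1 : ℝ → ℝ := fun x => x/4 + p - p * Real.exp x / u x with hG1_def
  set G : ℝ → ℝ := fun x => x^2/8 - (-(p*x) + Real.log (u x)) with hG_def
  have hud : ∀ x, HasDerivAt u (p * Real.exp x) x := by
    intro x
    exact (((Real.hasDerivAt_exp x).const_mul p).const_add (1 - p))
  have hGd : ∀ x, HasDerivAt G (G1 x) x := by
    intro x
    have hlog : HasDerivAt (fun y => Real.log (u y)) (p * Real.exp x / u x) x :=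
      (hud x).log (ne_of_gt (hu x))
    have h1 : HasDerivAt (fun y => -(p*y) + Real.log (u y)) (-p + p * Real.exp x / u x) x :=
      (((hasDerivAt_id x).const_mul p).neg.add hlog).congr_deriv (by ring)
    have h2 : HasDerivAt (fun y : ℝ => y^2/8) (x/4) x := by
      have := (hasDerivAt_pow 2 x).div_const 8
      exact this.congr_deriv (by ring)
    exact (h2.sub h1).congr_deriv (by simp [hG1_def]; ring)
  have hG1d : ∀ x, HasDerivAt G1
      (1/4 - (p * Real.exp x * u x - p * Real.exp x * (p * Real.exp x)) / (u x)^2) x := by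
    intro x
    have hdiv : HasDerivAt (fun y => p * Real.exp y / u y)
        ((p * Real.exp x * u x - p * Real.exp x * (p * Real.exp x)) / (u x)^2) x :=
      ((Real.hasDerivAt_exp x).const_mul p).div (hud x) (ne_of_gt (hu x))
    have h2 : HasDerivAt (fun y : ℝ => y/4 + p) (1/4) x := by
      simpa using ((hasDerivAt_id x).div_const 4).add_const p
    exact h2.sub hdiv
  have hG1mono : Monotone G1 := by
    apply monotone_of_deriv_nonneg (fun x => (hG1d x).differentiableAt)
    intro x
    rw [(hG1d x).deriv]
    have hux := hu x
    have he := Real.exp_pos x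
    rw [sub_nonneg, div_le_iff₀ (by positivity)]
    have huu : u x = 1 - p + p * Real.exp x := rfl
    nlinarith [sq_nonneg ((1-p) - p * Real.exp x)]
  have hG1_zero : G1 0 = 0 := by
    simp [hG1_def, hu_def]
  have hGmono : MonotoneOn G (Set.Ici 0) := by
    apply monotoneOn_of_deriv_nonneg (convex_Ici 0)
    · exact Continuous.continuousOn
        (Differentiable.continuous (fun x => (hGd x).differentiableAt))
    · exact (Differentiable.differentiableOn (fun x => (hGd x).differentiableAt))
    · intro x hx
      rw [(hGd x).deriv, ← hG1_zero]
      exact hG1mono (le_of_lt (by simpa using hx))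
  intro h hh
  have := hGmono (Set.self_mem_Ici) (Set.mem_Ici.2 hh) hh
  have hG0 : G 0 = 0 := by simp [hG_def, hu_def]
  rw [hG0] at this
  simp only [hG_def] at this
  linarith

/-- Hoeffding's lemma, interval form. -/
lemma hoeffding_interval {α : Type*} [MeasurableSpace α] (ρ : Measure α)
    [IsProbabilityMeasure ρ] (g : α → ℝ) (hg : Measurable g) (a b : ℝ)
    (h1 : ∀ x, a ≤ g x) (h2 : ∀ x, g x ≤ b) :
    ∫ x, Real.exp (g x) ∂ρ ≤ Real.exp ((∫ x, g x ∂ρ) + (b-a)^2/8) := by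
  have hne : Nonempty α := by
    by_contra hne
    rw [not_nonempty_iff] at hne
    have h0 : (Set.univ : Set α) = ∅ := Set.univ_eq_empty_iff.2 hne
    have := measure_univ (μ := ρ)
    rw [h0] at this
    simp at this
  obtain ⟨x₀⟩ := hne
  have hab : a ≤ b := le_trans (h1 x₀) (h2 x₀)
  have hgint : Integrable g ρ :=
    mcdiarmid_integrable_of_bdd ρ g hg (max |a| |b|) (fun x => abs_le.2
      ⟨le_trans (neg_le_neg (le_max_left |a| |b|)) (le_trans (neg_abs_le a) (h1 x)),
       le_trans (h2 x) (le_trans (le_abs_self b) (le_max_right |a| |b|))⟩)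
  set m := ∫ x, g x ∂ρ with hm_def
  have hma : a ≤ m := by
    calc a = ∫ _, a ∂ρ := by simp
    _ ≤ m := integral_mono (integrable_const a) hgint h1
  have hmb : m ≤ b := by
    calc m ≤ ∫ _, b ∂ρ := integral_mono hgint (integrable_const b) h2
    _ = b := by simp
  rcases eq_or_lt_of_le hab with heq | hlt
  · -- a = b: g is constant
    have hconst : ∀ x, g x = a := fun x => le_antisymm (heq ▸ h2 x) (h1 x)
    have : (fun x => Real.exp (g x)) = fun _ => Real.exp a := funext fun x => by rw [hconst x]
    rw [this]
    have hma' : m = a := by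
      rw [hm_def]
      have : g = fun _ => a := funext hconst
      rw [this]; simp
    simp [hma', heq]
  · -- a < b
    have hba : 0 < b - a := sub_pos.2 hlt
    -- pointwise convexity bound
    have hptwise : ∀ x, Real.exp (g x) ≤
        ((b - g x) * Real.exp a + (g x - a) * Real.exp b) / (b - a) := by
      intro x
      have hθ1 : 0 ≤ (b - g x) / (b - a) := div_nonneg (sub_nonneg.2 (h2 x)) hba.le
      have hθ2 : 0 ≤ (g x - a) / (b - a) := div_nonneg (sub_nonneg.2 (h1 x)) hba.le
      have hθs : (b - g x) / (b - a) + (g x - a) / (b - a) = 1 := by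
        field_simp
        ring
      have := convexOn_exp.2 (Set.mem_univ a) (Set.mem_univ b) hθ1 hθ2 hθs
      have harg : ((b - g x) / (b - a)) • a + ((g x - a) / (b - a)) • b = g x := by
        simp only [smul_eq_mul]
        rw [div_mul_eq_mul_div, div_mul_eq_mul_div, ← add_div, div_eq_iff hba.ne']
        ring
      rw [harg] at this
      have this2 : Real.exp (g x) ≤ ((b - g x) / (b - a)) * Real.exp a
          + ((g x - a) / (b - a)) * Real.exp b := by simpa [smul_eq_mul] using this
      have : ((b - g x) / (b - a)) * Real.exp a + ((g x - a) / (b - a)) * Real.exp b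
          = ((b - g x) * Real.exp a + (g x - a) * Real.exp b) / (b - a) := by ring
      linarith
    -- integrate
    have hint1 : Integrable (fun x => Real.exp (g x)) ρ :=
      mcdiarmid_integrable_of_bdd ρ _ (hg.exp) (Real.exp b) (fun x => by
        rw [abs_of_pos (Real.exp_pos _)]
        exact Real.exp_le_exp.2 (h2 x))
    have hint2 : Integrable (fun x => ((b - g x) * Real.exp a + (g x - a) * Real.exp b) / (b - a)) ρ := by
      apply Integrable.div_const
      exact ((((integrable_const b).sub hgint).mul_const _).add
        ((hgint.sub (integrable_const a)).mul_const _))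
    have hstep : ∫ x, Real.exp (g x) ∂ρ ≤ ((b - m) * Real.exp a + (m - a) * Real.exp b) / (b - a) := by
      calc ∫ x, Real.exp (g x) ∂ρ
          ≤ ∫ x, ((b - g x) * Real.exp a + (g x - a) * Real.exp b) / (b - a) ∂ρ :=
            integral_mono hint1 hint2 hptwise
        _ = ((b - m) * Real.exp a + (m - a) * Real.exp b) / (b - a) := by
            rw [integral_div]
            congr 1
            have hfe : (fun x => (b - g x) * Real.exp a + (g x - a) * Real.exp b)
                = fun x => (Real.exp b - Real.exp a) * g x + (b * Real.exp a - a * Real.exp b) := by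
              funext x; ring
            rw [hfe, integral_add (hgint.const_mul _) (integrable_const _),
              MeasureTheory.integral_const_mul, integral_const]
            simp only [Measure.real, measure_univ, ENNReal.toReal_one, one_smul, ← hm_def]
            ring
    -- algebra: rewrite the RHS via the core lemma
    set p := (m - a) / (b - a) with hp_def
    set h := b - a with hh_def
    have hp0 : 0 ≤ p := div_nonneg (sub_nonneg.2 hma) hba.le
    have hp1 : p ≤ 1 := (div_le_one hba).2 (by linarith)
    have hupos : 0 < 1 - p + p * Real.exp h := by
      have := Real.exp_pos h
      rcases lt_or_eq_of_le hp1 with h1 | h1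
      · nlinarith
      · nlinarith
    have hkey : ((b - m) * Real.exp a + (m - a) * Real.exp b) / (b - a)
        = Real.exp (m + (-(p*h) + Real.log (1 - p + p * Real.exp h))) := by
      rw [Real.exp_add, Real.exp_add, Real.exp_log hupos]
      have e1 : Real.exp b = Real.exp a * Real.exp h := by
        rw [← Real.exp_add]; congr 1; simp [hh_def]
      have e2 : Real.exp m * Real.exp (-(p*h)) = Real.exp a := by
        rw [← Real.exp_add]; congr 1
        simp only [hp_def, hh_def]
        field_simp
        ring
      rw [e1, ← e2]
      have h1p : 1 - p = (b - m) / (b - a) := by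
        rw [hp_def, hh_def]
        field_simp
        ring
      rw [mul_add, h1p]
      rw [hp_def]
      field_simp
      ring
    calc ∫ x, Real.exp (g x) ∂ρ
        ≤ ((b - m) * Real.exp a + (m - a) * Real.exp b) / (b - a) := hstep
      _ = Real.exp (m + (-(p*h) + Real.log (1 - p + p * Real.exp h))) := hkey
      _ ≤ Real.exp (m + h^2/8) := by
          apply Real.exp_le_exp.2
          have := mcdiarmid_core p hp0 hp1 h hba.le
          linarith
      _ = Real.exp (m + (b-a)^2/8) := by rw [hh_def]

/-- Hoeffding's lemma, oscillation form. -/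
lemma hoeffding_osc {α : Type*} [MeasurableSpace α] (ρ : Measure α)
    [IsProbabilityMeasure ρ] (g : α → ℝ) (hg : Measurable g) (c : ℝ)
    (hosc : ∀ x y, |g x - g y| ≤ c) :
    ∫ x, Real.exp (g x) ∂ρ ≤ Real.exp ((∫ x, g x ∂ρ) + c^2/8) := by
  have hne : Nonempty α := by
    by_contra hne
    rw [not_nonempty_iff] at hne
    have h0 : (Set.univ : Set α) = ∅ := Set.univ_eq_empty_iff.2 hne
    have := measure_univ (μ := ρ)
    rw [h0] at this
    simp at this
  obtain ⟨x₀⟩ := hne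
  have hbddA : BddAbove (Set.range g) := ⟨g x₀ + c, by
    rintro _ ⟨x, rfl⟩
    have := (abs_le.1 (hosc x x₀)).2
    linarith⟩
  have hbddB : BddBelow (Set.range g) := ⟨g x₀ - c, by
    rintro _ ⟨x, rfl⟩
    have := (abs_le.1 (hosc x₀ x)).2
    linarith⟩
  have hrne : (Set.range g).Nonempty := ⟨g x₀, Set.mem_range_self x₀⟩
  set a := sInf (Set.range g) with ha
  set b := sSup (Set.range g) with hb
  have h1 : ∀ x, a ≤ g x := fun x => csInf_le hbddB (Set.mem_range_self x)
  have h2 : ∀ x, g x ≤ b := fun x => le_csSup hbddA (Set.mem_range_self x)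
  have hab : a ≤ b := le_trans (h1 x₀) (h2 x₀)
  have hba : b - a ≤ c := by
    have hbc : b ≤ a + c := by
      apply csSup_le hrne
      rintro _ ⟨x, rfl⟩
      have : g x - c ≤ a := le_csInf hrne (by
        rintro _ ⟨y, rfl⟩
        have := (abs_le.1 (hosc x y)).2
        linarith)
      linarith
    linarith
  calc ∫ x, Real.exp (g x) ∂ρ ≤ Real.exp ((∫ x, g x ∂ρ) + (b-a)^2/8) :=
        hoeffding_interval ρ g hg a b h1 h2
    _ ≤ Real.exp ((∫ x, g x ∂ρ) + c^2/8) := by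
        apply Real.exp_le_exp.2
        have h0 : 0 ≤ b - a := sub_nonneg.2 hab
        have : (b-a)^2 ≤ c^2 := by nlinarith
        linarith

/-- Total oscillation bound from bounded differences. -/
lemma osc_of_bdd_diff {𝒳 : Type*} {n : ℕ} (f : (Fin n → 𝒳) → ℝ) (c : Fin n → ℝ)
    (hbdd : ∀ (i : Fin n) (x : Fin n → 𝒳) (x' : 𝒳),
      |f x - f (Function.update x i x')| ≤ c i) :
    ∀ x y, |f x - f y| ≤ ∑ i, c i := by
  classical
  suffices H : ∀ (s : Finset (Fin n)) (x y : Fin n → 𝒳),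
      (∀ i, i ∉ s → x i = y i) → |f x - f y| ≤ ∑ i ∈ s, c i by
    intro x y
    exact H Finset.univ x y (fun i hi => absurd (Finset.mem_univ i) hi)
  intro s
  induction s using Finset.induction_on with
  | empty =>
    intro x y h
    have : x = y := funext fun i => h i (Finset.notMem_empty i)
    simp [this]
  | @insert i s hi ih =>
    intro x y h
    set x' := Function.update x i (y i) with hx'
    have h1 : |f x - f x'| ≤ c i := hbdd i x (y i)
    have h2 : ∀ j, j ∉ s → x' j = y j := by
      intro j hj
      by_cases hji : j = i
      · subst hji; simp [hx']
      · rw [hx', Function.update_of_ne hji]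
        exact h j (by simp [hji, hj])
    calc |f x - f y| = |(f x - f x') + (f x' - f y)| := by ring_nf
      _ ≤ |f x - f x'| + |f x' - f y| := abs_add_le _ _
      _ ≤ c i + ∑ j ∈ s, c j := add_le_add h1 (ih x' y h2)
      _ = ∑ j ∈ insert i s, c j := (Finset.sum_insert hi).symm

lemma cons_measurable {𝒳 : Type*} [MeasurableSpace 𝒳] {n : ℕ} :
    Measurable (fun w : 𝒳 × (Fin n → 𝒳) => Fin.cons w.1 w.2 : 𝒳 × (Fin n → 𝒳) → Fin (n+1) → 𝒳) := by
  apply measurable_pi_lambda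
  intro i
  refine Fin.cases ?_ ?_ i
  · simpa using measurable_fst
  · intro j
    simp only [Fin.cons_succ]
    exact (measurable_pi_apply j).comp measurable_snd

/-- Tensorization: mgf bound for product measures. -/
lemma mgf_pi {𝒳 : Type*} [MeasurableSpace 𝒳] :
    ∀ (n : ℕ) (ν : Fin n → Measure 𝒳), (∀ i, IsProbabilityMeasure (ν i)) →
    ∀ (f : (Fin n → 𝒳) → ℝ), Measurable f →
    ∀ (c : Fin n → ℝ), (∀ (i : Fin n) (x : Fin n → 𝒳) (x' : 𝒳),
      |f x - f (Function.update x i x')| ≤ c i) →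
    ∫ x, Real.exp (f x) ∂(Measure.pi ν) ≤
      Real.exp ((∫ x, f x ∂(Measure.pi ν)) + (∑ i, (c i)^2)/8) := by
  intro n
  induction n with
  | zero =>
    intro ν hν f hf c hbdd
    haveI := fun i => hν i
    haveI : IsProbabilityMeasure (Measure.pi ν) := inferInstance
    have hconst : ∀ x : Fin 0 → 𝒳, f x = f (fun i => i.elim0) := by
      intro x
      congr 1
      exact funext fun i => i.elim0
    rw [show f = (fun _ => f (fun i => i.elim0)) from funext hconst]
    simp
  | succ n IH =>
    intro ν hν f hf c hbdd
    haveI := fun i => hν i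
    haveI : IsProbabilityMeasure (Measure.pi ν) := inferInstance
    -- nonempty 𝒳
    have hne : Nonempty 𝒳 := by
      by_contra hne
      rw [not_nonempty_iff] at hne
      have h0 : (Set.univ : Set 𝒳) = ∅ := Set.univ_eq_empty_iff.2 hne
      have := measure_univ (μ := ν 0)
      rw [h0] at this
      simp at this
    obtain ⟨z₀⟩ := hne
    -- boundedness of f
    have hosc := osc_of_bdd_diff f c hbdd
    set M : ℝ := |f (fun _ => z₀)| + ∑ i, c i with hM
    have hfb : ∀ x, |f x| ≤ M := by
      intro x
      have := hosc x (fun _ => z₀)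
      calc |f x| ≤ |f x - f (fun _ => z₀)| + |f (fun _ => z₀)| := by
            simpa using abs_add_le (f x - f (fun _ => z₀)) (f (fun _ => z₀))
        _ ≤ M := by rw [hM]; linarith
    -- measure preserving equivalence
    set e := MeasurableEquiv.piFinSuccAbove (fun _ : Fin (n+1) => 𝒳) 0 with he
    set ν' := fun j : Fin n => ν (Fin.succAbove 0 j) with hν'
    haveI : ∀ j, IsProbabilityMeasure (ν' j) := fun j => hν (Fin.succAbove 0 j)
    haveI : IsProbabilityMeasure (Measure.pi ν') := inferInstance
    have hMP : MeasurePreserving e (Measure.pi ν) ((ν 0).prod (Measure.pi ν')) :=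
      measurePreserving_piFinSuccAbove ν 0
    have hsymm : ∀ w : 𝒳 × (Fin n → 𝒳), e.symm w = Fin.cons w.1 w.2 := by
      intro w
      show (Fin.insertNthEquiv (fun _ : Fin (n+1) => 𝒳) 0) w = _
      simp [Fin.insertNthEquiv, Fin.insertNth_zero']
    -- transport integrals
    have hint_exp : ∀ (F : (Fin (n+1) → 𝒳) → ℝ), Measurable F →
        ∫ x, F x ∂(Measure.pi ν) = ∫ w, F (Fin.cons w.1 w.2) ∂((ν 0).prod (Measure.pi ν')) := by
      intro F hF
      rw [← (hMP.symm e).integral_comp e.symm.measurableEmbedding F]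
      congr 1
      exact funext fun w => by rw [hsymm w]
    -- measurability facts
    have hFm : Measurable (fun w : 𝒳 × (Fin n → 𝒳) => f (Fin.cons w.1 w.2)) :=
      hf.comp cons_measurable
    have hFem : Measurable (fun w : 𝒳 × (Fin n → 𝒳) => Real.exp (f (Fin.cons w.1 w.2))) :=
      hFm.exp
    set π' := Measure.pi ν' with hπ'
    set g : 𝒳 → ℝ := fun x => ∫ y, f (Fin.cons x y) ∂π' with hg_def
    have hg_meas : Measurable g := by
      have : StronglyMeasurable (fun w : 𝒳 × (Fin n → 𝒳) => f (Fin.cons w.1 w.2)) :=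
        hFm.stronglyMeasurable
    -- g = fun x => ∫ y, F (x, y)
      exact (this.integral_prod_right').measurable
    -- boundedness of g
    have hg_bdd : ∀ x, |g x| ≤ M := by
      intro x
      calc |g x| ≤ ∫ y, |f (Fin.cons x y)| ∂π' := mcdiarmid_abs_int_le π' _
        _ ≤ ∫ _, M ∂π' := integral_mono
            (mcdiarmid_integrable_of_bdd π' _ ((hf.comp (cons_measurable.comp
              (measurable_const.prodMk measurable_id))).abs) M (fun y => by
                simpa using hfb (Fin.cons x y)))
            (integrable_const M) (fun y => hfb (Fin.cons x y))
        _ = M := by simp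
    -- bounded differences for g at coordinate 0
    have hg_osc : ∀ x x', |g x - g x'| ≤ c 0 := by
      intro x x'
      have hint1 : Integrable (fun y => f (Fin.cons x y)) π' :=
        mcdiarmid_integrable_of_bdd π' _ (hf.comp (cons_measurable.comp
          (measurable_const.prodMk measurable_id))) M (fun y => hfb _)
      have hint2 : Integrable (fun y => f (Fin.cons x' y)) π' :=
        mcdiarmid_integrable_of_bdd π' _ (hf.comp (cons_measurable.comp
          (measurable_const.prodMk measurable_id))) M (fun y => hfb _)
      have hdiff : g x - g x' = ∫ y, (f (Fin.cons x y) - f (Fin.cons x' y)) ∂π' := by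
        rw [hg_def]
        exact (integral_sub hint1 hint2).symm
      rw [hdiff]
      calc |∫ y, (f (Fin.cons x y) - f (Fin.cons x' y)) ∂π'|
          ≤ ∫ y, |f (Fin.cons x y) - f (Fin.cons x' y)| ∂π' := mcdiarmid_abs_int_le π' _
        _ ≤ ∫ _, c 0 ∂π' := integral_mono ((hint1.sub hint2).abs) (integrable_const _)
            (fun y => by
              have h0 : (Fin.cons x' y : Fin (n+1) → 𝒳)
                  = Function.update (Fin.cons x y : Fin (n+1) → 𝒳) 0 x' := by
                rw [Fin.update_cons_zero]
              rw [h0]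
              exact hbdd 0 (Fin.cons x y) x')
        _ = c 0 := by simp
    -- inner integral bound via IH
    set c' : Fin n → ℝ := fun j => c (Fin.succAbove 0 j) with hc'
    set S' : ℝ := ∑ j, (c' j)^2 with hS'
    have hS'nonneg : 0 ≤ S' := Finset.sum_nonneg fun j _ => sq_nonneg _
    have hinner : ∀ x : 𝒳, ∫ y, Real.exp (f (Fin.cons x y)) ∂π' ≤ Real.exp (g x + S'/8) := by
      intro x
      have hfx : Measurable (fun y => f (Fin.cons x y)) :=
        hf.comp (cons_measurable.comp (measurable_const.prodMk measurable_id))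
      have hbdd' : ∀ (j : Fin n) (y : Fin n → 𝒳) (x' : 𝒳),
          |f (Fin.cons x y) - f (Fin.cons x (Function.update y j x'))| ≤ c' j := by
        intro j y x'
        have hupd : (Fin.cons x (Function.update y j x') : Fin (n+1) → 𝒳)
            = Function.update (Fin.cons x y : Fin (n+1) → 𝒳) j.succ x' :=
          Fin.cons_update (α := fun _ : Fin (n+1) => 𝒳) x y j x'
        rw [hupd, hc']
        simpa [Fin.succAbove_zero] using hbdd j.succ (Fin.cons x y) x'
      exact IH ν' (fun j => hν _) _ hfx c' hbdd'
    -- measurable & bounded families for outer integral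
    have houter_meas : Measurable (fun x => ∫ y, Real.exp (f (Fin.cons x y)) ∂π') :=
      (hFem.stronglyMeasurable.integral_prod_right').measurable
    have houter_bdd : ∀ x, |∫ y, Real.exp (f (Fin.cons x y)) ∂π'| ≤ Real.exp M := by
      intro x
      have hfx : Measurable (fun y => f (Fin.cons x y)) :=
        hf.comp (cons_measurable.comp (measurable_const.prodMk measurable_id))
      have hIx : Integrable (fun y => Real.exp (f (Fin.cons x y))) π' :=
        mcdiarmid_integrable_of_bdd π' _ hfx.exp (Real.exp M) (fun y => by
          rw [abs_of_pos (Real.exp_pos _)]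
          exact Real.exp_le_exp.2 (le_trans (le_abs_self _) (hfb _)))
      rw [abs_of_nonneg (integral_nonneg (fun y => (Real.exp_pos _).le))]
      calc ∫ y, Real.exp (f (Fin.cons x y)) ∂π'
          ≤ ∫ _, Real.exp M ∂π' := integral_mono hIx (integrable_const _)
            (fun y => Real.exp_le_exp.2 (le_trans (le_abs_self _) (hfb _)))
        _ = Real.exp M := by simp
    -- integrability on product
    have hIexp : Integrable (fun w : 𝒳 × (Fin n → 𝒳) => Real.exp (f (Fin.cons w.1 w.2)))
        ((ν 0).prod π') :=
      mcdiarmid_integrable_of_bdd _ _ hFem (Real.exp M) (fun w => by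
        rw [abs_of_pos (Real.exp_pos _)]
        exact Real.exp_le_exp.2 (le_trans (le_abs_self _) (hfb _)))
    have hIf : Integrable (fun w : 𝒳 × (Fin n → 𝒳) => f (Fin.cons w.1 w.2)) ((ν 0).prod π') :=
      mcdiarmid_integrable_of_bdd _ _ hFm M (fun w => hfb _)
    -- ∫ f dπ = ∫ g dν0
    have hmean : ∫ x, f x ∂(Measure.pi ν) = ∫ x, g x ∂(ν 0) := by
      rw [hint_exp f hf, MeasureTheory.integral_prod _ hIf]
    -- the sum identity
    have hsum : (∑ i : Fin (n+1), (c i)^2) = (c 0)^2 + S' := by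
      rw [hS', hc', Fin.sum_univ_succ]
      simp [Fin.succAbove_zero]
    -- main chain
    calc ∫ x, Real.exp (f x) ∂(Measure.pi ν)
        = ∫ w, Real.exp (f (Fin.cons w.1 w.2)) ∂((ν 0).prod π') :=
          hint_exp (fun x => Real.exp (f x)) hf.exp
      _ = ∫ x, ∫ y, Real.exp (f (Fin.cons x y)) ∂π' ∂(ν 0) := MeasureTheory.integral_prod _ hIexp
      _ ≤ ∫ x, Real.exp (g x + S'/8) ∂(ν 0) := integral_mono
          (mcdiarmid_integrable_of_bdd _ _ houter_meas (Real.exp M) houter_bdd)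
          (mcdiarmid_integrable_of_bdd _ _ ((hg_meas.add_const _).exp) (Real.exp (M + S'/8)) (fun x => by
            rw [abs_of_pos (Real.exp_pos _)]
            exact Real.exp_le_exp.2 (add_le_add_left (le_trans (le_abs_self _) (hg_bdd x)) _)))
          hinner
      _ = (∫ x, Real.exp (g x) ∂(ν 0)) * Real.exp (S'/8) := by
          simp_rw [Real.exp_add]
          rw [integral_mul_const]
      _ ≤ Real.exp ((∫ x, g x ∂(ν 0)) + (c 0)^2/8) * Real.exp (S'/8) := by
          apply mul_le_mul_of_nonneg_right _ (le_of_lt (Real.exp_pos _))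
          exact hoeffding_osc (ν 0) g hg_meas (c 0) hg_osc
      _ = Real.exp ((∫ x, f x ∂(Measure.pi ν)) + (∑ i : Fin (n+1), (c i)^2)/8) := by
          rw [← Real.exp_add, hmean, hsum]
          ring_nf

lemma map_eq_pi_of_iIndepFun {Ω : Type*} [MeasurableSpace Ω] {𝒳 : Type*} [MeasurableSpace 𝒳]
    (μ : Measure Ω) [IsProbabilityMeasure μ] (n : ℕ) (X : Fin n → Ω → 𝒳)
    (hXmeas : ∀ i, Measurable (X i))
    (hXindep : iIndepFun X μ) :
    Measure.map (fun ω i => X i ω) μ = Measure.pi (fun i => Measure.map (X i) μ) := by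
  haveI : ∀ i, IsProbabilityMeasure (Measure.map (X i) μ) :=
    fun i => Measure.isProbabilityMeasure_map (hXmeas i).aemeasurable
  symm
  apply Measure.pi_eq
  intro s hs
  rw [Measure.map_apply (measurable_pi_lambda _ (fun i => hXmeas i))
    (MeasurableSet.univ_pi hs)]
  have hpre : (fun ω i => X i ω) ⁻¹' (Set.pi Set.univ s) = ⋂ i ∈ Finset.univ, X i ⁻¹' s i := by
    ext ω
    simp [Set.mem_pi]
  rw [hpre, hXindep.measure_inter_preimage_eq_mul Finset.univ (fun i _ => hs i)]
  exact Finset.prod_congr rfl fun i _ =>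
    (Measure.map_apply (hXmeas i) (hs i)).symm

/-- McDiarmid's bounded differences inequality: if `X₁, …, X_n` are independent and
`f` has the bounded difference property with constants `c i`, then with
`Z = f(X₁,…,X_n)` and `ν = (1/4)∑ᵢ cᵢ²`, `P(Z − E[Z] > t) ≤ exp(−t²/(2ν))` for all
`t > 0`. -/
theorem bounded_differences_inequality
    {Ω : Type*} [MeasurableSpace Ω]
    {𝒳 : Type*} [MeasurableSpace 𝒳]
    (μ : Measure Ω) [IsProbabilityMeasure μ]
    (n : ℕ) (X : Fin n → Ω → 𝒳) (hXmeas : ∀ i, Measurable (X i))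
    (hXindep : iIndepFun X μ)
    (f : (Fin n → 𝒳) → ℝ) (hf : Measurable f)
    (c : Fin n → ℝ)
    (hbdd : ∀ (i : Fin n) (x : Fin n → 𝒳) (x' : 𝒳),
      |f x - f (Function.update x i x')| ≤ c i) :
    ∀ t : ℝ, 0 < t →
      (μ {ω | f (fun i => X i ω) - ∫ ω', f (fun i => X i ω') ∂μ > t}).toReal
        ≤ Real.exp (-(t^2) / (2 * ((1/4) * ∑ i, (c i)^2))) := by
  intro t ht
  set Z : Ω → ℝ := fun ω => f (fun i => X i ω) with hZ_def
  have hZmeas : Measurable Z := hf.comp (measurable_pi_lambda _ hXmeas)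
  set m : ℝ := ∫ ω', f (fun i => X i ω') ∂μ with hm_def
  set V : ℝ := ∑ i, (c i)^2 with hV_def
  have hV0 : 0 ≤ V := Finset.sum_nonneg fun i _ => sq_nonneg _
  rcases eq_or_lt_of_le hV0 with hV | hV
  · -- V = 0 : RHS is exp(-(t^2)/0) = 1
    have hrhs : Real.exp (-(t^2) / (2 * ((1/4) * V))) = 1 := by
      rw [← hV]
      norm_num
    rw [hrhs]
    calc (μ {ω | Z ω - m > t}).toReal ≤ (1 : ENNReal).toReal :=
          ENNReal.toReal_mono ENNReal.one_ne_top prob_le_one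
      _ = 1 := by simp
  · -- V > 0
    haveI : ∀ i, IsProbabilityMeasure (Measure.map (X i) μ) :=
      fun i => Measure.isProbabilityMeasure_map (hXmeas i).aemeasurable
    set Pm : Measure (Fin n → 𝒳) := Measure.pi (fun i => Measure.map (X i) μ) with hPm_def
    haveI : IsProbabilityMeasure Pm := by
      rw [hPm_def]; infer_instance
    have hmap : Measure.map (fun ω i => X i ω) μ = Pm :=
      map_eq_pi_of_iIndepFun μ n X hXmeas hXindep
    have hXv : Measurable (fun ω i => X i ω) := measurable_pi_lambda _ hXmeas
    -- transporting integrals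
    have htrans : ∀ (φ : (Fin n → 𝒳) → ℝ), Measurable φ →
        ∫ x, φ x ∂Pm = ∫ ω, φ (fun i => X i ω) ∂μ := by
      intro φ hφ
      rw [← hmap, integral_map hXv.aemeasurable hφ.aestronglyMeasurable]
    -- boundedness of f
    have hXne : Nonempty (Fin n → 𝒳) := mcdiarmid_nonempty_of_prob Pm
    obtain ⟨x₀⟩ := hXne
    have hosc := osc_of_bdd_diff f c hbdd
    set M : ℝ := |f x₀| + ∑ i, c i with hM
    have hfb : ∀ x, |f x| ≤ M := by
      intro x
      have := hosc x x₀
      calc |f x| ≤ |f x - f x₀| + |f x₀| := by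
            simpa using abs_add_le (f x - f x₀) (f x₀)
        _ ≤ M := by rw [hM]; linarith
    have hfint : Integrable f Pm := mcdiarmid_integrable_of_bdd Pm f hf M hfb
    have hm_pi : ∫ x, f x ∂Pm = m := htrans f hf
    -- Chernoff parameter
    set s : ℝ := 4 * t / V with hs_def
    have hs : 0 < s := by positivity
    -- mgf bound via tensorization
    have hbdd' : ∀ (i : Fin n) (x : Fin n → 𝒳) (x' : 𝒳),
        |s * f x - s * f (Function.update x i x')| ≤ s * c i := by
      intro i x x'
      rw [← mul_sub, abs_mul, abs_of_pos hs]
      exact mul_le_mul_of_nonneg_left (hbdd i x x') hs.le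
    have hmgf_pi := mgf_pi n (fun i => Measure.map (X i) μ) (fun i => inferInstance)
      (fun x => s * f x) (hf.const_mul s) (fun i => s * c i) hbdd'
    have hsum : (∑ i, (s * c i)^2) = s^2 * V := by
      rw [hV_def, Finset.mul_sum]
      exact Finset.sum_congr rfl fun i _ => by ring
    have hsm : ∫ x, s * f x ∂Pm = s * m := by
      rw [MeasureTheory.integral_const_mul, hm_pi]
    rw [← hPm_def, hsum, hsm] at hmgf_pi
    have hmgf : ∫ ω, Real.exp (s * Z ω) ∂μ ≤ Real.exp (s * m + s^2 * V / 8) := by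
      have := htrans (fun x => Real.exp (s * f x)) (hf.const_mul s).exp
      rw [← this]
      calc ∫ x, Real.exp (s * f x) ∂Pm ≤ Real.exp (s * m + (s^2 * V) / 8) := hmgf_pi
        _ = Real.exp (s * m + s^2 * V / 8) := by ring_nf
    -- apply Chernoff bound to Y = Z - m
    have hYint : Integrable (fun ω => Real.exp (s * (Z ω - m))) μ :=
      mcdiarmid_integrable_of_bdd μ _ (((hZmeas.sub_const m).const_mul s).exp)
        (Real.exp (s * (M + |m|))) (fun ω => by
          rw [abs_of_pos (Real.exp_pos _)]
          apply Real.exp_le_exp.2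
          apply mul_le_mul_of_nonneg_left _ hs.le
          have h1 := hfb (fun i => X i ω)
          have h2 := abs_le.1 h1
          have h3 := neg_abs_le m
          have h4 := le_abs_self m
          simp only [hZ_def]
          linarith [h2.2])
    have hchern := measure_ge_le_exp_mul_mgf (μ := μ) (X := fun ω => Z ω - m) t hs.le hYint
    -- compute the mgf of Z - m
    have hmgf_val : mgf (fun ω => Z ω - m) μ s ≤ Real.exp (-(s*m) + (s * m + s^2 * V / 8)) := by
      rw [mgf]
      have heq : (fun ω => Real.exp (s * (Z ω - m)))
          = fun ω => Real.exp (-(s*m)) * Real.exp (s * Z ω) := by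
        funext ω
        rw [← Real.exp_add]
        congr 1
        ring
      calc ∫ ω, Real.exp (s * (Z ω - m)) ∂μ
          = Real.exp (-(s*m)) * ∫ ω, Real.exp (s * Z ω) ∂μ := by
            rw [heq, MeasureTheory.integral_const_mul]
        _ ≤ Real.exp (-(s*m)) * Real.exp (s * m + s^2 * V / 8) :=
            mul_le_mul_of_nonneg_left hmgf (Real.exp_pos _).le
        _ = Real.exp (-(s*m) + (s * m + s^2 * V / 8)) := (Real.exp_add _ _).symm
    -- event inclusion
    have hincl : {ω | Z ω - m > t} ⊆ {ω | t ≤ Z ω - m} := fun ω hω => le_of_lt (by simpa using hω)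
    have hfinal : (μ {ω | Z ω - m > t}).toReal ≤ Real.exp (-2 * t^2 / V) := by
      calc (μ {ω | Z ω - m > t}).toReal
          ≤ (μ {ω | t ≤ Z ω - m}).toReal :=
            ENNReal.toReal_mono (measure_ne_top μ _) (measure_mono hincl)
        _ ≤ Real.exp (-s * t) * mgf (fun ω => Z ω - m) μ s := hchern
        _ ≤ Real.exp (-s * t) * Real.exp (-(s*m) + (s * m + s^2 * V / 8)) :=
            mul_le_mul_of_nonneg_left hmgf_val (Real.exp_pos _).le
        _ = Real.exp (-s * t + (-(s*m) + (s * m + s^2 * V / 8))) := (Real.exp_add _ _).symm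
        _ = Real.exp (-2 * t^2 / V) := by
            congr 1
            rw [hs_def]
            field_simp
            ring
    calc (μ {ω | Z ω - m > t}).toReal ≤ Real.exp (-2 * t^2 / V) := hfinal
      _ = Real.exp (-(t^2) / (2 * ((1/4) * V))) := by
          congr 1
          rw [div_eq_div_iff (by positivity) (by positivity)]
          ring
end
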